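/- arXiv:1701.02859 — 8 statements merged into one kernel-verified Lean document; each statement's English description precedes it below -/
import Mathlib

section
/- For any finite simple connected graph G, the total ve-degree (sum over all vertices of their ve-degrees) equals M₁(G) − 3t(G), where M₁(G) = Σ_{v∈V} deg(v)² is the first Zagreb index and t(G) is the number of triangles in G. -/
open scoped Classical
open Finset SimpleGraph

/-- ve-degree of a vertex: number of edges incident to at least one vertex of N[v]. -/
noncomputable def veDeg {V : Type*} [Fintype V] (G : SimpleGraph V) (v : V) : ℕ :=
  (G.edgeFinset.filter (fun e => ∃ u ∈ insert v (G.neighborFinset v), u ∈ e)).card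

/-- ev-degree of an edge s(u,v): |N[u] ∪ N[v]|. -/
noncomputable def evDeg {V : Type*} [Fintype V] (G : SimpleGraph V) : Sym2 V → ℕ :=
  Sym2.lift ⟨fun u v =>
      ((insert u (G.neighborFinset u)) ∪ (insert v (G.neighborFinset v))).card,
    fun u v => congrArg Finset.card (Finset.union_comm _ _)⟩

/-- ev-degree Zagreb index S(G). -/
noncomputable def evZagreb {V : Type*} [Fintype V] (G : SimpleGraph V) : ℕ :=
  ∑ e ∈ G.edgeFinset, (evDeg G e) ^ 2

/-- first ve-degree Zagreb alpha index S^α(G). -/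
noncomputable def veAlpha {V : Type*} [Fintype V] (G : SimpleGraph V) : ℕ :=
  ∑ v, (veDeg G v) ^ 2

/-- first ve-degree Zagreb beta index S^β(G). -/
noncomputable def veBeta {V : Type*} [Fintype V] (G : SimpleGraph V) : ℕ :=
  ∑ e ∈ G.edgeFinset,
    Sym2.lift ⟨fun u v => veDeg G u + veDeg G v, fun u v => Nat.add_comm _ _⟩ e

/-- second ve-degree Zagreb index S^μ(G). -/
noncomputable def veMu {V : Type*} [Fintype V] (G : SimpleGraph V) : ℕ :=
  ∑ e ∈ G.edgeFinset,
    Sym2.lift ⟨fun u v => veDeg G u * veDeg G v, fun u v => Nat.mul_comm _ _⟩ e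

/-- second Zagreb index M₂(G). -/
noncomputable def zagreb2 {V : Type*} [Fintype V] (G : SimpleGraph V) : ℕ :=
  ∑ e ∈ G.edgeFinset,
    Sym2.lift ⟨fun u v => G.degree u * G.degree v, fun u v => Nat.mul_comm _ _⟩ e

/-- forgotten topological index F(G). -/
noncomputable def forgotten {V : Type*} [Fintype V] (G : SimpleGraph V) : ℕ :=
  ∑ e ∈ G.edgeFinset,
    Sym2.lift ⟨fun u v => G.degree u ^ 2 + G.degree v ^ 2, fun u v => Nat.add_comm _ _⟩ e

/-- the star graph K_{1,n-1} on `Fin n`, with center 0. -/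
def starGraph (n : ℕ) : SimpleGraph (Fin n) where
  Adj a b := a ≠ b ∧ (a.val = 0 ∨ b.val = 0)
  symm := ⟨fun a b h => ⟨h.1.symm, h.2.symm⟩⟩
  loopless := ⟨fun a h => h.1 rfl⟩

theorem total_ve_eq_zagreb1_sub_triangles {V : Type*} [Fintype V] (G : SimpleGraph V)
    (hG : G.Connected) :
    (∑ v, veDeg G v : ℤ) =
      ∑ v, (G.degree v : ℤ) ^ 2 - 3 * ((G.cliqueFinset 3).card : ℤ) := by
  classical
  set E := G.edgeFinset with hE
  set D : Sym2 V → ℕ := Sym2.lift ⟨fun a b => G.degree a + G.degree b,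
    fun a b => Nat.add_comm _ _⟩ with hD
  set C : Sym2 V → ℕ := Sym2.lift ⟨fun a b =>
      ((G.neighborFinset a) ∩ (G.neighborFinset b)).card,
    fun a b => congrArg Finset.card (Finset.inter_comm _ _)⟩ with hC
  -- Step A: swap sums
  have stepA : ∑ v, veDeg G v
      = ∑ e ∈ E, (univ.filter
          (fun v => ∃ u ∈ insert v (G.neighborFinset v), u ∈ e)).card := by
    simp only [veDeg, Finset.card_filter]
    rw [Finset.sum_comm]
  -- Step B
  have stepB : ∀ e ∈ E, (univ.filter
      (fun v => ∃ u ∈ insert v (G.neighborFinset v), u ∈ e)).card + C e = D e := by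
    intro e he
    induction e using Sym2.ind with
    | _ a b =>
      have hab : G.Adj a b := by
        rw [hE, mem_edgeFinset] at he; exact he
      have hfil : (univ.filter
          (fun v => ∃ u ∈ insert v (G.neighborFinset v), u ∈ s(a, b)))
          = G.neighborFinset a ∪ G.neighborFinset b := by
        ext v
        simp only [mem_filter, mem_univ, true_and, mem_insert, mem_neighborFinset,
          Sym2.mem_iff, mem_union]
        constructor
        · rintro ⟨u, (rfl | hu), (rfl | rfl)⟩
          · exact Or.inr hab.symm
          · exact Or.inl hab
          · exact Or.inl hu.symm
          · exact Or.inr hu.symm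
        · rintro (h | h)
          · exact ⟨a, Or.inr h.symm, Or.inl rfl⟩
          · exact ⟨b, Or.inr h.symm, Or.inr rfl⟩
      rw [hfil]
      simpa [hD, hC] using Finset.card_union_add_card_inter
        (G.neighborFinset a) (G.neighborFinset b)
  -- Step C
  have stepC : ∑ e ∈ E, D e = ∑ v, G.degree v ^ 2 := by
    have h1 : ∀ e ∈ E, D e = ∑ v, (if v ∈ e then G.degree v else 0) := by
      intro e he
      induction e using Sym2.ind with
      | _ a b =>
        have hab : G.Adj a b := by rw [hE, mem_edgeFinset] at he; exact he
        have hne : a ≠ b := hab.ne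
        rw [← Finset.sum_filter]
        have : (univ.filter (fun v => v ∈ s(a, b))) = {a, b} := by
          ext v; simp [Sym2.mem_iff]
        rw [this, Finset.sum_pair hne]
        simp [hD]
    rw [Finset.sum_congr rfl h1, Finset.sum_comm]
    refine Finset.sum_congr rfl fun v _ => ?_
    rw [← Finset.sum_filter, Finset.sum_const, smul_eq_mul]
    have : E.filter (fun e => v ∈ e) = G.incidenceFinset v :=
      (G.incidenceFinset_eq_filter v).symm
    rw [this, G.card_incidenceFinset_eq_degree]
    ring
  -- Step D
  have stepD : ∑ e ∈ E, C e = 3 * (G.cliqueFinset 3).card := by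
    have h1 : ∀ e ∈ E, C e = (univ.filter (fun c => ∀ x ∈ e, G.Adj c x)).card := by
      intro e he
      induction e using Sym2.ind with
      | _ a b =>
        simp only [hC, Sym2.lift_mk]
        congr 1
        ext c
        simp only [Finset.mem_inter, mem_neighborFinset, Finset.mem_filter,
          Finset.mem_univ, true_and]
        constructor
        · rintro ⟨h₁, h₂⟩ x hx
          rw [Sym2.mem_iff] at hx
          rcases hx with rfl | rfl
          · exact h₁.symm
          · exact h₂.symm
        · intro h
          exact ⟨(h a (by simp)).symm, (h b (by simp)).symm⟩
    rw [Finset.sum_congr rfl h1, ← Finset.card_sigma]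
    have h2 : 3 * (G.cliqueFinset 3).card
        = ((G.cliqueFinset 3).sigma (fun T => (T : Finset V))).card := by
      rw [Finset.card_sigma]
      rw [Finset.sum_congr rfl (fun T hT => ?_), Finset.sum_const, smul_eq_mul,
        Nat.mul_comm]
      exact ((SimpleGraph.mem_cliqueFinset_iff.mp hT).2 : T.card = 3)
    rw [h2]
    set tri : V → Sym2 V → Finset V := fun c => Sym2.lift ⟨fun a b => {c, a, b},
      fun a b => by show ({c, a, b} : Finset V) = {c, b, a}; rw [Finset.pair_comm a b]⟩
      with htri
    refine Finset.card_bij (fun p _ => ⟨tri p.2 p.1, p.2⟩) ?_ ?_ ?_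
    · rintro ⟨e, c⟩ hp
      simp only [Finset.mem_sigma, Finset.mem_filter, Finset.mem_univ, true_and] at hp
      obtain ⟨he, hc⟩ := hp
      induction e using Sym2.ind with
      | _ a b =>
        have hab : G.Adj a b := by rw [hE, mem_edgeFinset] at he; exact he
        have hca : G.Adj c a := hc a (by simp)
        have hcb : G.Adj c b := hc b (by simp)
        simp only [Finset.mem_sigma, htri, Sym2.lift_mk]
        refine ⟨?_, by simp⟩
        rw [SimpleGraph.mem_cliqueFinset_iff]
        exact SimpleGraph.is3Clique_triple_iff.mpr ⟨hca, hcb, hab⟩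
    · rintro ⟨e, c⟩ hp ⟨e', c'⟩ hp' heq
      simp only [Sigma.mk.inj_iff] at heq
      obtain ⟨hT, hcc⟩ := heq
      have hcc' : c = c' := eq_of_heq hcc
      subst hcc'
      simp only [Finset.mem_sigma, Finset.mem_filter, Finset.mem_univ, true_and] at hp hp'
      obtain ⟨he, hc⟩ := hp
      obtain ⟨he', hc'⟩ := hp'
      have hee : e = e' := by
        induction e using Sym2.ind with
        | _ a b =>
          induction e' using Sym2.ind with
          | _ a' b' =>
            have hab : G.Adj a b := by rw [hE, mem_edgeFinset] at he; exact he
            have hab' : G.Adj a' b' := by rw [hE, mem_edgeFinset] at he'; exact he'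
            have hca : G.Adj c a := hc a (by simp)
            have hcb : G.Adj c b := hc b (by simp)
            have hca' : G.Adj c a' := hc' a' (by simp)
            have hcb' : G.Adj c b' := hc' b' (by simp)
            simp only [htri, Sym2.lift_mk] at hT
            have hpair : ({a, b} : Finset V) = {a', b'} := by
              have h := congrArg (fun s => Finset.erase s c) hT
              simp only [Finset.erase_insert_eq_erase] at h
              rwa [Finset.erase_eq_of_notMem (by simp [hca.ne, hcb.ne]),
                Finset.erase_eq_of_notMem (by simp [hca'.ne, hcb'.ne])] at h
            have ha : a = a' ∨ a = b' := by
              have : a ∈ ({a', b'} : Finset V) := hpair ▸ (by simp)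
              simpa using this
            have hb : b = a' ∨ b = b' := by
              have : b ∈ ({a', b'} : Finset V) := hpair ▸ (by simp)
              simpa using this
            rw [Sym2.eq_iff]
            rcases ha with rfl | rfl
            · rcases hb with rfl | rfl
              · exact absurd rfl hab.ne
              · exact Or.inl ⟨rfl, rfl⟩
            · rcases hb with rfl | rfl
              · exact Or.inr ⟨rfl, rfl⟩
              · exact absurd rfl hab.ne
      rw [hee]
    · rintro ⟨T, c⟩ hp
      simp only [Finset.mem_sigma] at hp
      obtain ⟨hT, hc⟩ := hp
      have hclique := SimpleGraph.mem_cliqueFinset_iff.mp hT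
      have hcard : (T.erase c).card = 2 := by
        rw [Finset.card_erase_of_mem hc, hclique.2]
      obtain ⟨a, b, hne, hab⟩ := Finset.card_eq_two.mp hcard
      have haT : a ∈ T := Finset.mem_of_mem_erase (hab ▸ (by simp : a ∈ ({a, b} : Finset V)) : a ∈ T.erase c)
      have hbT : b ∈ T := Finset.mem_of_mem_erase (hab ▸ (by simp : b ∈ ({a, b} : Finset V)) : b ∈ T.erase c)
      have hac : a ≠ c := Finset.ne_of_mem_erase (hab ▸ (by simp : a ∈ ({a, b} : Finset V)) : a ∈ T.erase c)
      have hbc : b ≠ c := Finset.ne_of_mem_erase (hab ▸ (by simp : b ∈ ({a, b} : Finset V)) : b ∈ T.erase c)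
      refine ⟨⟨s(a, b), c⟩, ?_, ?_⟩
      · simp only [Finset.mem_sigma, Finset.mem_filter, Finset.mem_univ, true_and]
        refine ⟨?_, ?_⟩
        · rw [hE, mem_edgeFinset]
          exact hclique.1 haT hbT hne
        · intro x hx
          rw [Sym2.mem_iff] at hx
          rcases hx with rfl | rfl
          · exact hclique.1 hc haT (Ne.symm hac)
          · exact hclique.1 hc hbT (Ne.symm hbc)
      · have htT : tri c s(a, b) = T := by
          simp only [htri, Sym2.lift_mk]
          rw [show ({c, a, b} : Finset V) = insert c {a, b} from rfl, ← hab,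
            Finset.insert_erase hc]
        exact congrArg (fun s => (⟨s, c⟩ : Σ _ : Finset V, V)) htT
  -- combine
  have hsum : (∑ v, veDeg G v) + ∑ e ∈ E, C e = ∑ e ∈ E, D e := by
    rw [stepA, ← Finset.sum_add_distrib]
    exact Finset.sum_congr rfl stepB
  have hz := congrArg (Nat.cast : ℕ → ℤ) hsum
  push_cast [stepC, stepD] at hz
  linarith
end

section
/- For any tree T, the total ve-degree of T equals the first Zagreb index M₁(T). -/
open scoped Classical
open Finset SimpleGraph

lemma tree_no_triangle {V : Type*} {G : SimpleGraph V} (hT : G.IsAcyclic)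
    {v u u' : V} (h1 : G.Adj v u) (h2 : G.Adj v u') (h3 : G.Adj u u') : False := by
  have hb := (SimpleGraph.isAcyclic_iff_forall_adj_isBridge.mp hT) h3
  rw [SimpleGraph.isBridge_iff_adj_and_forall_walk_mem_edges] at hb
  have := hb (SimpleGraph.Walk.cons h1.symm (SimpleGraph.Walk.cons h2 SimpleGraph.Walk.nil))
  simp [SimpleGraph.Walk.edges, Sym2.eq_iff, h1.ne, h1.ne', h2.ne, h2.ne', h3.ne, h3.ne'] at this

lemma veDeg_tree {V : Type*} [Fintype V] {G : SimpleGraph V} (hT : G.IsAcyclic) (v : V) :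
    veDeg G v = ∑ u ∈ G.neighborFinset v, G.degree u := by
  classical
  have key : (G.edgeFinset.filter (fun e => ∃ u ∈ insert v (G.neighborFinset v), u ∈ e))
      = (G.neighborFinset v).biUnion (fun u => G.incidenceFinset u) := by
    ext e
    simp only [Finset.mem_filter, Finset.mem_biUnion, SimpleGraph.incidenceFinset_eq_filter,
      Finset.mem_insert, SimpleGraph.mem_neighborFinset]
    constructor
    · rintro ⟨he, w, (rfl | hw), hwe⟩
      · induction e using Sym2.inductionOn with
        | hf a b =>
          rw [SimpleGraph.mem_edgeFinset, SimpleGraph.mem_edgeSet] at he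
          rcases Sym2.mem_iff.mp hwe with rfl | rfl
          · exact ⟨b, he, by simp [he], Sym2.mem_mk_right _ _⟩
          · exact ⟨a, he.symm, by simp [he], Sym2.mem_mk_left _ _⟩
      · exact ⟨w, hw, he, hwe⟩
    · rintro ⟨u, hu, he, hue⟩
      exact ⟨he, u, Or.inr hu, hue⟩
  rw [veDeg, key, Finset.card_biUnion, ]
  · exact Finset.sum_congr rfl fun u _ => G.card_incidenceFinset_eq_degree u
  · intro a ha b hb hab
    rw [Finset.mem_coe, SimpleGraph.mem_neighborFinset] at ha hb
    rw [Function.onFun, Finset.disjoint_left]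
    intro e hea heb
    rw [SimpleGraph.mem_incidenceFinset] at hea heb
    have he : e = s(a, b) := G.incidenceSet_inter_incidenceSet_subset hab ⟨hea, heb⟩
    subst he
    have hadj : G.Adj a b := (G.mk'_mem_incidenceSet_left_iff).mp hea
    exact tree_no_triangle hT ha hb hadj

theorem total_ve_eq_zagreb1_of_tree {V : Type*} [Fintype V] (G : SimpleGraph V)
    (hT : G.IsTree) :
    ∑ v, veDeg G v = ∑ v, (G.degree v) ^ 2 := by
  classical
  have h1 : ∀ v, veDeg G v = ∑ u ∈ G.neighborFinset v, G.degree u :=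
    veDeg_tree hT.IsAcyclic
  calc ∑ v, veDeg G v = ∑ v, ∑ u ∈ G.neighborFinset v, G.degree u := by
        exact Finset.sum_congr rfl fun v _ => h1 v
    _ = ∑ v, ∑ u, if G.Adj v u then G.degree u else 0 := by
        refine Finset.sum_congr rfl fun v _ => ?_
        rw [show G.neighborFinset v = Finset.univ.filter (G.Adj v) from by
          ext u; simp [SimpleGraph.mem_neighborFinset], Finset.sum_filter]
    _ = ∑ u, ∑ v, if G.Adj v u then G.degree u else 0 := Finset.sum_comm
    _ = ∑ u, (G.degree u) ^ 2 := by
        refine Finset.sum_congr rfl fun u _ => ?_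
        have hf : (Finset.univ.filter (fun v => G.Adj v u)) = G.neighborFinset u := by
          ext w; simp [SimpleGraph.mem_neighborFinset, G.adj_comm]
        rw [← Finset.sum_filter, hf, Finset.sum_const, smul_eq_mul, sq,
          ← SimpleGraph.card_neighborFinset_eq_degree]
end

section
/- Let T be a tree and v a vertex of T. Then the ve-degree of v equals the sum of the degrees of the neighbors of v: c_v = Σ_{u ∈ N(v)} deg(u). -/
open scoped Classical
open Finset SimpleGraph

lemma acyclic_no_triangle {V : Type*} {G : SimpleGraph V} (hA : G.IsAcyclic)
    {v u w : V} (h1 : G.Adj v u) (h2 : G.Adj v w) (huw : u ≠ w) : ¬ G.Adj u w := by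
  intro h
  have hp : (SimpleGraph.Walk.cons h SimpleGraph.Walk.nil).IsPath := by
    simp [huw]
  have hq : (SimpleGraph.Walk.cons h1.symm
      (SimpleGraph.Walk.cons h2 SimpleGraph.Walk.nil)).IsPath := by
    simp [h1.ne', h2.ne, huw]
  have := (SimpleGraph.isAcyclic_iff_path_unique.mp hA) ⟨_, hp⟩ ⟨_, hq⟩
  have hlen := congrArg (fun p : G.Path u w => p.1.length) this
  simp at hlen

theorem veDeg_eq_sum_degrees_of_tree {V : Type*} [Fintype V] (G : SimpleGraph V)
    (hT : G.IsTree) (v : V) :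
    veDeg G v = ∑ u ∈ G.neighborFinset v, G.degree u := by
  classical
  have hA := hT.IsAcyclic
  have hset : G.edgeFinset.filter (fun e => ∃ u ∈ insert v (G.neighborFinset v), u ∈ e)
      = (G.neighborFinset v).biUnion (fun u => G.incidenceFinset u) := by
    ext e
    induction e using Sym2.ind with
    | _ a b =>
      simp only [Finset.mem_filter, Finset.mem_biUnion, Finset.mem_insert,
        SimpleGraph.mem_neighborFinset, SimpleGraph.mem_incidenceFinset,
        SimpleGraph.incidenceSet, Set.mem_sep_iff, SimpleGraph.mem_edgeFinset,
        SimpleGraph.mem_edgeSet, Sym2.mem_iff]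
      constructor
      · rintro ⟨hab, u, hu, hm⟩
        rcases hm with hm | hm <;> subst hm <;> rcases hu with rfl | hu
        · exact ⟨b, hab, hab, Or.inr rfl⟩
        · exact ⟨u, hu, hab, Or.inl rfl⟩
        · exact ⟨a, hab.symm, hab, Or.inl rfl⟩
        · exact ⟨u, hu, hab, Or.inr rfl⟩
      · rintro ⟨u, hu, hab, hm⟩
        exact ⟨hab, u, Or.inr hu, hm⟩
  rw [veDeg, hset, Finset.card_biUnion]
  · exact Finset.sum_congr rfl fun u _ => G.card_incidenceFinset_eq_degree u
  · intro u hu w hw huw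
    simp only [Finset.mem_coe, SimpleGraph.mem_neighborFinset] at hu hw
    rw [Function.onFun, Finset.disjoint_left]
    intro e heu hew
    rw [SimpleGraph.mem_incidenceFinset] at heu hew
    have : G.Adj u w := by
      have := heu.2
      induction e using Sym2.ind with
      | _ a b =>
        rcases Sym2.mem_iff.mp heu.2 with rfl | rfl <;>
          rcases Sym2.mem_iff.mp hew.2 with rfl | rfl
        · exact absurd rfl huw
        · exact heu.1
        · exact heu.1.symm
        · exact absurd rfl huw
    exact acyclic_no_triangle hA hu hw huw this
end

section
/- Let T be a tree. Then the first ve-degree Zagreb beta index satisfies S^β(T) = 2·M₂(T), where S^β(T) = Σ_{uv ∈ E(T)} (c_u + c_v), c_v is the ve-degree of v, and M₂(T) = Σ_{uv ∈ E(T)} deg(u)·deg(v) is the second Zagreb index. -/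
open scoped Classical
open Finset SimpleGraph

section aux
variable {V : Type*} [Fintype V] (G : SimpleGraph V)

lemma dart_sum_edge' (f : Sym2 V → ℕ) :
    ∑ d : G.Dart, f d.edge = ∑ e ∈ G.edgeFinset, 2 * f e := by
  classical
  rw [← Finset.sum_fiberwise_of_maps_to (t := G.edgeFinset) (g := fun d : G.Dart => d.edge)
      (fun d _ => by simp [SimpleGraph.Dart.edge_mem])]
  refine Finset.sum_congr rfl fun e he => ?_
  rw [Finset.sum_congr rfl (fun d hd => by
      rw [(Finset.mem_filter.mp hd).2]), Finset.sum_const,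
    show (Finset.univ.filter (fun d : G.Dart => d.edge = e)) =
      Finset.univ.filter (fun d : G.Dart => d.edge ∈ ({e} : Set (Sym2 V))) by simp]
  simp [G.dart_edge_fiber_card e (by simpa using he)]

lemma dart_sum_fst' (F : V → V → ℕ) :
    ∑ d : G.Dart, F d.fst d.snd = ∑ v, ∑ u ∈ G.neighborFinset v, F v u := by
  classical
  rw [← Finset.sum_fiberwise_of_maps_to (g := fun d : G.Dart => d.fst)
      (fun d _ => Finset.mem_univ _)]
  refine Finset.sum_congr rfl fun v _ => ?_
  rw [show (Finset.univ.filter (fun d : G.Dart => d.fst = v)) =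
      Finset.univ.image (G.dartOfNeighborSet v) from G.dart_fst_fiber v,
    Finset.sum_image (fun a _ b _ h => G.dartOfNeighborSet_injective v h)]
  simp only [dartOfNeighborSet]
  rw [SimpleGraph.neighborFinset_def, ← Finset.sum_set_coe]

lemma two_mul_sum_edge' (F : V → V → ℕ) (hF : ∀ u v, F u v = F v u) :
    2 * ∑ e ∈ G.edgeFinset, Sym2.lift ⟨F, hF⟩ e = ∑ v, ∑ u ∈ G.neighborFinset v, F v u := by
  rw [Finset.mul_sum, ← dart_sum_edge' G (Sym2.lift ⟨F, hF⟩), ← dart_sum_fst' G F]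
  exact Finset.sum_congr rfl fun d _ => rfl

lemma dart_sum_snd' (f : V → ℕ) :
    ∑ d : G.Dart, f d.snd = ∑ d : G.Dart, f d.fst := by
  refine Fintype.sum_equiv ⟨fun d : G.Dart => d.symm, fun d => d.symm,
    fun d => d.symm_symm, fun d => d.symm_symm⟩ _ _ fun d => rfl

lemma no_triangle (hA : G.IsAcyclic) {v u w : V} (h1 : G.Adj v u) (h2 : G.Adj v w)
    (hne : u ≠ w) : ¬ G.Adj u w := by
  intro h3
  refine hA (SimpleGraph.Walk.cons h1 (SimpleGraph.Walk.cons h3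
    (SimpleGraph.Walk.cons h2.symm SimpleGraph.Walk.nil))) ?_
  rw [SimpleGraph.Walk.cons_isCycle_iff]
  constructor
  · simp [SimpleGraph.Walk.isPath_def, hne, h2.ne', h3.ne, h1.ne']
  · simp only [SimpleGraph.Walk.edges_cons, SimpleGraph.Walk.edges_nil, List.mem_cons,
      List.not_mem_nil, or_false]
    push_neg
    constructor
    · intro h; rw [Sym2.eq_iff] at h
      rcases h with ⟨h, _⟩ | ⟨h, _⟩ <;> simp_all [h1.ne, h2.ne]
    · intro h; rw [Sym2.eq_iff] at h
      rcases h with ⟨h, _⟩ | ⟨_, h⟩ <;> simp_all [h1.ne, h2.ne]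

lemma veDeg_eq_sum (hA : G.IsAcyclic) (v : V) :
    veDeg G v = ∑ u ∈ G.neighborFinset v, G.degree u := by
  classical
  have hset : (G.edgeFinset.filter (fun e => ∃ u ∈ insert v (G.neighborFinset v), u ∈ e))
      = (G.neighborFinset v).biUnion (fun u => G.incidenceFinset u) := by
    ext e
    induction e with
    | _ a b =>
      simp only [Finset.mem_filter, Finset.mem_biUnion, SimpleGraph.mem_incidenceFinset,
        Finset.mem_insert, SimpleGraph.mem_neighborFinset, SimpleGraph.mem_edgeFinset,
        SimpleGraph.incidenceSet, Set.mem_setOf_eq, Sym2.mem_iff, SimpleGraph.mem_edgeSet]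
      constructor
      · rintro ⟨hab, u, hu | hu, hue⟩
        · rcases hue with h | h
          · exact ⟨b, hu ▸ h ▸ hab, hab, Or.inr rfl⟩
          · exact ⟨a, (hu ▸ h ▸ hab).symm, hab, Or.inl rfl⟩
        · exact ⟨u, hu, hab, hue⟩
      · rintro ⟨u, hu, hab, hue⟩
        exact ⟨hab, u, Or.inr hu, hue⟩
  rw [veDeg, hset, Finset.card_biUnion, Finset.sum_congr rfl
    (fun u _ => G.card_incidenceFinset_eq_degree u)]
  intro u hu w hw huw
  rw [Finset.mem_coe, SimpleGraph.mem_neighborFinset] at hu hw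
  simp only [Function.onFun, Finset.disjoint_left]
  intro e heu hew
  rw [SimpleGraph.mem_incidenceFinset] at heu hew
  have he : e = s(u, w) := (Sym2.mem_and_mem_iff huw).mp ⟨heu.2, hew.2⟩
  rw [he] at heu
  exact no_triangle G hA hu hw huw ((SimpleGraph.mem_edgeSet G).mp heu.1)

end aux

lemma sum_lift_add {V : Type*} [Fintype V] (G : SimpleGraph V) (f : V → ℕ) :
    2 * (∑ e ∈ G.edgeFinset,
      Sym2.lift ⟨fun u v => f u + f v, fun u v => Nat.add_comm _ _⟩ e) =
    2 * ∑ v, G.degree v * f v := by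
  classical
  rw [two_mul_sum_edge' G _ (fun u v => Nat.add_comm _ _)]
  have h1 : ∑ v, ∑ u ∈ G.neighborFinset v, (f v + f u)
      = (∑ v, ∑ u ∈ G.neighborFinset v, f v) + ∑ v, ∑ u ∈ G.neighborFinset v, f u := by
    rw [← Finset.sum_add_distrib]
    exact Finset.sum_congr rfl fun v _ => Finset.sum_add_distrib
  have h2 : ∑ v, ∑ u ∈ G.neighborFinset v, f v = ∑ v, G.degree v * f v := by
    refine Finset.sum_congr rfl fun v _ => ?_
    rw [Finset.sum_const, G.card_neighborFinset_eq_degree, smul_eq_mul]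
  have h3 : ∑ v, ∑ u ∈ G.neighborFinset v, f u = ∑ v, G.degree v * f v := by
    rw [← dart_sum_fst' G (fun v u => f u), dart_sum_snd', dart_sum_fst' G (fun v u => f v), h2]
  rw [h1, h2, h3, two_mul]


theorem veBeta_eq_two_mul_zagreb2_of_tree {V : Type*} [Fintype V] (G : SimpleGraph V)
    (hT : G.IsTree) :
    veBeta G = 2 * zagreb2 G := by
  classical
  rw [veBeta, zagreb2]
  have h := sum_lift_add G (veDeg G)
  have hbeta := Nat.eq_of_mul_eq_mul_left (by norm_num : 0 < 2) h
  rw [hbeta, two_mul_sum_edge' G _ (fun u v => Nat.mul_comm _ _)]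
  refine Finset.sum_congr rfl fun v _ => ?_
  rw [veDeg_eq_sum G hT.2 v, Finset.mul_sum]
end

section
/- For the path graph Pₙ with n ≥ 3 vertices, the ev-degree Zagreb index equals 16n − 30. -/
open scoped Classical
open Finset SimpleGraph

lemma closedNbhd (m : ℕ) (u x : Fin (m+1)) :
    (x ∈ insert u ((SimpleGraph.pathGraph (m+1)).neighborFinset u)) ↔
      (u.val ≤ x.val + 1 ∧ x.val ≤ u.val + 1) := by
  simp only [Finset.mem_insert, SimpleGraph.mem_neighborFinset, SimpleGraph.pathGraph_adj,
    Fin.ext_iff]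
  omega

lemma edgeFinset_path (m : ℕ) :
    (SimpleGraph.pathGraph (m+1)).edgeFinset =
      Finset.image (fun i : Fin m => s(i.castSucc, i.succ)) Finset.univ := by
  ext e
  refine Sym2.ind (fun u v => ?_) e
  simp only [SimpleGraph.mem_edgeFinset, SimpleGraph.mem_edgeSet, SimpleGraph.pathGraph_adj,
    Finset.mem_image, Finset.mem_univ, true_and]
  constructor
  · rintro (h | h)
    · refine ⟨⟨u.val, by omega⟩, ?_⟩
      rw [Sym2.eq_iff]
      exact Or.inl ⟨Fin.ext rfl, Fin.ext (by simp [h])⟩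
    · refine ⟨⟨v.val, by omega⟩, ?_⟩
      rw [Sym2.eq_iff]
      exact Or.inr ⟨Fin.ext (by simp), Fin.ext (by simp [Fin.ext_iff]; omega)⟩
  · rintro ⟨i, hi⟩
    rw [Sym2.eq_iff] at hi
    rcases hi with ⟨h1, h2⟩ | ⟨h1, h2⟩ <;>
      simp [Fin.ext_iff] at h1 h2 <;> omega

lemma evDeg_path (m : ℕ) (i : Fin m) :
    evDeg (SimpleGraph.pathGraph (m+1)) s(i.castSucc, i.succ) =
      min (i.val + 2) m + 1 - (i.val - 1) := by
  have hlt : ∀ x ∈ Finset.Icc (i.val - 1) (min (i.val + 2) m), x < m + 1 := by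
    intro x hx; simp [Finset.mem_Icc] at hx; omega
  have hcard : ∀ (s : Finset (Fin (m+1))),
      (∀ x, x ∈ s ↔ (i.val ≤ x.val + 1 ∧ x.val ≤ i.val + 2)) →
      s.card = min (i.val + 2) m + 1 - (i.val - 1) := by
    intro s hs
    have hse : s = (Finset.Icc (i.val - 1) (min (i.val + 2) m)).attachFin hlt := by
      ext x
      rw [hs, Finset.mem_attachFin, Finset.mem_Icc]
      have := x.isLt
      omega
    rw [hse, Finset.card_attachFin, Nat.card_Icc]
  simp only [evDeg, Sym2.lift_mk]
  apply hcard
  intro x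
  simp only [Finset.mem_union, Finset.mem_insert, SimpleGraph.mem_neighborFinset,
    SimpleGraph.pathGraph_adj, Fin.ext_iff, Fin.coe_castSucc, Fin.val_succ]
  omega

lemma sum_arith (m : ℕ) (hm : 2 ≤ m) :
    ∑ j ∈ Finset.range m, (min (j + 2) m + 1 - (j - 1)) ^ 2 = 16 * (m + 1) - 30 := by
  have hF : ∀ j < m,
      (min (j + 2) m + 1 - (j - 1)) ^ 2 + (if j = 0 ∨ j = m - 1 then 7 else 0) = 16 := by
    intro j hj
    split_ifs with h
    · have hv : min (j + 2) m + 1 - (j - 1) = 3 := by omega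
      rw [hv]; norm_num
    · have hv : min (j + 2) m + 1 - (j - 1) = 4 := by omega
      rw [hv]; norm_num
  have h1 : ∑ j ∈ Finset.range m, ((min (j + 2) m + 1 - (j - 1)) ^ 2
      + (if j = 0 ∨ j = m - 1 then 7 else 0)) = 16 * m := by
    rw [Finset.sum_congr rfl (fun j hj => hF j (Finset.mem_range.mp hj))]
    simp [mul_comm]
  rw [Finset.sum_add_distrib] at h1
  have h2 : ∑ j ∈ Finset.range m, (if j = 0 ∨ j = m - 1 then 7 else 0) = 14 := by
    have : ∀ j, (if j = 0 ∨ j = m - 1 then 7 else 0)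
        = (if j ∈ ({0, m - 1} : Finset ℕ) then 7 else 0) := by
      intro j; simp [Finset.mem_insert]
    simp_rw [this]
    rw [Finset.sum_ite_mem]
    have hint : Finset.range m ∩ ({0, m - 1} : Finset ℕ) = {0, m - 1} := by
      rw [Finset.inter_eq_right]
      intro x hx
      simp only [Finset.mem_insert, Finset.mem_singleton] at hx
      rcases hx with rfl | rfl <;> simp [Finset.mem_range] <;> omega
    rw [hint, Finset.sum_pair (by omega)]
  omega

theorem evZagreb_pathGraph (n : ℕ) (hn : 3 ≤ n) :
    evZagreb (SimpleGraph.pathGraph n) = 16 * n - 30 := by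
  obtain ⟨m, rfl⟩ : ∃ m, n = m + 1 := ⟨n - 1, by omega⟩
  have hm : 2 ≤ m := by omega
  have hinj : ∀ x ∈ (Finset.univ : Finset (Fin m)), ∀ y ∈ Finset.univ,
      s(x.castSucc, x.succ) = s(y.castSucc, y.succ) → x = y := by
    intro x _ y _ h
    rw [Sym2.eq_iff] at h
    rcases h with ⟨h1, h2⟩ | ⟨h1, h2⟩ <;> simp [Fin.ext_iff] at h1 h2 ⊢ <;> omega
  rw [evZagreb, edgeFinset_path, Finset.sum_image hinj]
  simp only [evDeg_path]
  rw [Fin.sum_univ_eq_sum_range (fun j => (min (j + 2) m + 1 - (j - 1)) ^ 2)]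
  exact sum_arith m hm
end

section
/- Let T be a tree on n ≥ 3 vertices. Then 16n − 30 ≤ S(T) ≤ n²(n − 1), where S(T) is the ev-degree Zagreb index; the lower bound is attained if and only if T is a path and the upper bound if and only if T is a star. -/
open scoped Classical
open Finset SimpleGraph

section Helpers

variable {V : Type*} [Fintype V] {G : SimpleGraph V}

lemma tree_no_common (hT : G.IsTree) {u v w : V} (huv : G.Adj u v)
    (h1 : G.Adj u w) (h2 : G.Adj v w) : False := by
  have hq := isAcyclic_iff_path_unique.mp hT.IsAcyclic
  have hw : (Walk.cons h1 (Walk.cons h2.symm Walk.nil) : G.Walk u v).IsPath := by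
    simp [Walk.isPath_def, huv.ne, h1.ne, h2.ne']
  have h := hq (SimpleGraph.Path.singleton huv) ⟨_, hw⟩
  have := congrArg (fun q : G.Path u v => q.1.length) h
  simp [SimpleGraph.Path.singleton] at this

lemma evDeg_adj (hT : G.IsTree) {u v : V} (h : G.Adj u v) :
    evDeg G s(u, v) = G.degree u + G.degree v := by
  have hne := h.ne
  have hI : (insert u (G.neighborFinset u)) ∩ (insert v (G.neighborFinset v)) = {u, v} := by
    ext w
    simp only [Finset.mem_inter, Finset.mem_insert, mem_neighborFinset, Finset.mem_singleton]
    constructor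
    · rintro ⟨hu, hv⟩
      rcases hu with rfl | hu
      · exact Or.inl rfl
      rcases hv with rfl | hv
      · exact Or.inr rfl
      · exact absurd (tree_no_common hT h hu hv) not_false
    · rintro (rfl | rfl)
      · exact ⟨Or.inl rfl, Or.inr h.symm⟩
      · exact ⟨Or.inr h, Or.inl rfl⟩
  have hcu : (insert u (G.neighborFinset u)).card = G.degree u + 1 := by
    rw [Finset.card_insert_of_notMem (by simp)]; rfl
  have hcv : (insert v (G.neighborFinset v)).card = G.degree v + 1 := by
    rw [Finset.card_insert_of_notMem (by simp)]; rfl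
  have hc := Finset.card_union_add_card_inter
    (insert u (G.neighborFinset u)) (insert v (G.neighborFinset v))
  rw [hI, Finset.card_pair hne, hcu, hcv] at hc
  show ((insert u (G.neighborFinset u)) ∪ (insert v (G.neighborFinset v))).card = _
  omega

lemma evDeg_le_card {e : Sym2 V} : evDeg G e ≤ Fintype.card V := by
  induction e with
  | _ u v => exact Finset.card_le_card (Finset.subset_univ _)

lemma sum_dart_fst (f : V → ℕ) :
    ∑ d : G.Dart, f d.fst = ∑ v, G.degree v * f v := by
  rw [← Finset.sum_fiberwise_of_maps_to (fun (d : G.Dart) _ => Finset.mem_univ d.fst)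
    (fun d => f d.fst)]
  refine Finset.sum_congr rfl fun v _ => ?_
  rw [Finset.sum_congr rfl (fun d hd => ?_), Finset.sum_const, smul_eq_mul,
    show (Finset.univ.filter (fun d : G.Dart => d.fst = v)).card = G.degree v from
      G.dart_fst_fiber_card_eq_degree v]
  · exact congrArg f (Finset.mem_filter.mp hd).2

lemma sum_edge_ends (f : V → ℕ) :
    ∑ e ∈ G.edgeFinset, Sym2.lift ⟨fun u v => f u + f v, fun u v => Nat.add_comm _ _⟩ e
      = ∑ v, G.degree v * f v := by
  have h1 : ∑ e ∈ G.edgeFinset, (∑ d ∈ Finset.univ.filter (fun d : G.Dart => d.edge = e), f d.fst)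
      = ∑ d : G.Dart, f d.fst :=
    Finset.sum_fiberwise_of_maps_to
      (fun (d : G.Dart) _ => by rw [mem_edgeFinset]; exact d.edge_mem) (fun d => f d.fst)
  rw [← sum_dart_fst f, ← h1]
  refine Finset.sum_congr rfl fun e he => ?_
  rw [mem_edgeFinset] at he
  induction e with
  | _ u v =>
    let d : G.Dart := ⟨(u, v), he⟩
    have hfib : (Finset.univ.filter fun d' : G.Dart => d'.edge = s(u, v)) = {d, d.symm} := by
      have := d.edge_fiber
      simpa [Dart.edge, d] using this
    rw [show (Finset.univ.filter fun d' : G.Dart => d'.edge = s(u, v))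
        = {d, d.symm} from hfib]
    rw [Finset.sum_pair d.symm_ne.symm]
    simp [d, Dart.symm, Sym2.lift_mk]

lemma sum_evDeg (hT : G.IsTree) :
    ∑ e ∈ G.edgeFinset, evDeg G e = ∑ v, G.degree v ^ 2 := by
  rw [Finset.sum_congr rfl (fun e he => ?_), sum_edge_ends (fun v => G.degree v)]
  · exact Finset.sum_congr rfl fun v _ => (sq (G.degree v)).symm
  · rw [mem_edgeFinset] at he
    induction e with
    | _ u v => rw [evDeg_adj hT he, Sym2.lift_mk]



lemma tree_degree_pos (hT : G.IsTree) (h2 : 2 ≤ Fintype.card V) (v : V) :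
    0 < G.degree v := by
  rw [degree_pos_iff_exists_adj]
  obtain ⟨w, hw⟩ := Fintype.exists_ne_of_one_lt_card (by omega) v
  obtain ⟨p⟩ := hT.isConnected.preconnected v w
  cases p with
  | nil => exact absurd rfl hw.symm
  | cons h _ => exact ⟨_, h⟩

lemma degree_one_unique {u v w : V} (hd : G.degree u = 1) (hv : G.Adj u v)
    (hw : G.Adj u w) : v = w := by
  have : ∀ x ∈ G.neighborFinset u, ∀ y ∈ G.neighborFinset u, x = y :=
    Finset.card_le_one.mp (le_of_eq hd)
  exact this v (by simpa using hv) w (by simpa using hw)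

lemma not_both_leaves (hT : G.IsTree) (h3 : 3 ≤ Fintype.card V) {u v : V}
    (h : G.Adj u v) (hu : G.degree u = 1) (hv : G.degree v = 1) : False := by
  have : ∃ w, w ∉ ({u, v} : Finset V) := by
    by_contra hc
    push_neg at hc
    have : (Finset.univ : Finset V) ⊆ {u, v} := fun x _ => hc x
    have := Finset.card_le_card this
    simp only [Finset.card_univ] at this
    have := Finset.card_insert_le u ({v} : Finset V)
    simp only [Finset.card_singleton] at this
    omega
  obtain ⟨w, hw⟩ := this
  simp only [Finset.mem_insert, Finset.mem_singleton, not_or] at hw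
  obtain ⟨p, hp, -⟩ := (hT.isConnected.preconnected u w).exists_path_of_dist
  cases p with
  | nil => exact hw.1 rfl
  | cons h1 q =>
    rename_i x
    have hx : x = v := degree_one_unique hu h1 h
    subst hx
    cases q with
    | nil => exact hw.2 rfl
    | cons h2 r =>
      rename_i y
      have hy : y = u := degree_one_unique hv h2 h.symm
      subst hy
      simp [Walk.isPath_def] at hp

lemma exists_leaf (hT : G.IsTree) (h2 : 2 ≤ Fintype.card V) :
    ∃ v : V, G.degree v = 1 := by
  by_contra hc
  push_neg at hc
  have hge : ∀ v : V, 2 ≤ G.degree v := fun v => by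
    have := tree_degree_pos hT h2 v
    have := hc v
    omega
  have hsum : ∑ v, G.degree v = 2 * G.edgeFinset.card := G.sum_degrees_eq_twice_card_edges
  have hE := hT.card_edgeFinset
  have : ∑ v, G.degree v ≥ ∑ _v : V, 2 := Finset.sum_le_sum (fun v _ => hge v)
  simp only [Finset.sum_const, Finset.card_univ, smul_eq_mul] at this
  omega

lemma dist_adj_ne (hT : G.IsTree) {v0 u v : V} (huv : G.Adj u v) :
    G.dist v0 u ≠ G.dist v0 v := by
  intro heq
  have hconn := hT.isConnected
  obtain ⟨p, hp, hpl⟩ := (hconn.preconnected v0 u).exists_path_of_dist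
  obtain ⟨q, hq, hql⟩ := (hconn.preconnected v0 v).exists_path_of_dist
  have hpe : s(u, v) ∉ p.edges := by
    intro he
    have hvs : v ∈ p.support := p.snd_mem_support_of_mem_edges he
    have hsplit := congrArg Walk.length (p.take_spec hvs)
    rw [Walk.length_append] at hsplit
    have hd0 : (p.dropUntil v hvs).length ≠ 0 := fun h0 =>
      huv.ne (Walk.eq_of_length_eq_zero h0).symm
    have hle := G.dist_le (p.takeUntil v hvs)
    omega
  have hqe : s(u, v) ∉ q.edges := by
    intro he
    have hus : u ∈ q.support := q.fst_mem_support_of_mem_edges he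
    have hsplit := congrArg Walk.length (q.take_spec hus)
    rw [Walk.length_append] at hsplit
    have hd0 : (q.dropUntil u hus).length ≠ 0 := fun h0 =>
      huv.ne (Walk.eq_of_length_eq_zero h0)
    have hle := G.dist_le (q.takeUntil u hus)
    omega
  have hbr := (isAcyclic_iff_forall_adj_isBridge.mp hT.IsAcyclic) huv
  rw [isBridge_iff] at hbr
  refine hbr (reachable_delete_edges_iff_exists_walk.mpr ⟨p.reverse.append q, ?_⟩)
  rw [Walk.edges_append, Walk.edges_reverse]
  simp only [List.mem_append, List.mem_reverse]
  rintro (h | h)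
  exacts [hpe h, hqe h]

lemma dist_pred (hT : G.IsTree) {v0 v : V} (hv : G.dist v0 v ≠ 0) :
    ∃ u, G.Adj u v ∧ G.dist v0 u + 1 = G.dist v0 v := by
  have hconn := hT.isConnected
  obtain ⟨p, hp, hpl⟩ := (hconn.preconnected v v0).exists_path_of_dist
  rw [dist_comm] at hpl
  cases p with
  | nil => simp only [Walk.length_nil] at hpl; omega
  | cons h q =>
    rename_i x
    refine ⟨x, h.symm, ?_⟩
    have h1 : G.dist v0 x ≤ q.length := by
      have := G.dist_le q
      rwa [dist_comm] at this
    have h2 : G.dist v0 v ≤ G.dist v0 x + G.dist x v := hconn.dist_triangle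
    rw [dist_eq_one_iff_adj.mpr h.symm] at h2
    have h3 : q.length + 1 = G.dist v0 v := by simpa using hpl
    omega

lemma dist_step (hT : G.IsTree) {v0 u v : V} (huv : G.Adj u v) :
    G.dist v0 v ≤ G.dist v0 u + 1 := by
  have h2 : G.dist v0 v ≤ G.dist v0 u + G.dist u v := hT.isConnected.dist_triangle
  rwa [dist_eq_one_iff_adj.mpr huv] at h2

lemma path_iso (hT : G.IsTree) {n : ℕ} (hn : 3 ≤ n) (hcard : Fintype.card V = n)
    (hdeg : ∀ v, G.degree v ≤ 2) : Nonempty (G ≃g pathGraph n) := by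
  have hconn := hT.isConnected
  obtain ⟨v0, hv0⟩ := exists_leaf hT (by omega)
  have hDlt : ∀ v, G.dist v0 v < n := by
    intro v
    obtain ⟨p, hp, hl⟩ := (hconn.preconnected v0 v).exists_path_of_dist
    rw [← hcard, ← hl]
    exact hp.length_lt
  have hinj : ∀ k u v, G.dist v0 u = k → G.dist v0 v = k → u = v := by
    intro k
    induction k using Nat.strong_induction_on with
    | _ k IH =>
      rcases k with _ | k
      · intro u v hu hv
        rw [← hconn.dist_eq_zero_iff.mp hu]
        exact hconn.dist_eq_zero_iff.mp hv
      · intro u v hu hv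
        obtain ⟨u', hu', hu1⟩ := dist_pred hT (v0 := v0) (v := u) (by omega)
        obtain ⟨v', hv', hv1⟩ := dist_pred hT (v0 := v0) (v := v) (by omega)
        have huv' : u' = v' := IH k (Nat.lt_succ_self k) u' v' (by omega) (by omega)
        subst huv'
        by_contra hne2
        rcases Nat.eq_zero_or_pos k with hk | hk
        · -- u' = v0, a leaf
          have hu'0 : u' = v0 := (hconn.dist_eq_zero_iff.mp (by omega)).symm
          subst hu'0
          have hsub : ({u, v} : Finset V) ⊆ G.neighborFinset u' := by
            intro x hx
            simp only [Finset.mem_insert, Finset.mem_singleton] at hx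
            rcases hx with rfl | rfl
            · simpa using hu'
            · simpa using hv'
          have := Finset.card_le_card hsub
          rw [Finset.card_pair hne2] at this
          rw [card_neighborFinset_eq_degree] at this
          omega
        · obtain ⟨y, hy, hy1⟩ := dist_pred hT (v0 := v0) (v := u') (by omega)
          have hyu : y ≠ u := fun h => by rw [h] at hy1; omega
          have hyv : y ≠ v := fun h => by rw [h] at hy1; omega
          have hsub : ({u, v, y} : Finset V) ⊆ G.neighborFinset u' := by
            intro x hx
            simp only [Finset.mem_insert, Finset.mem_singleton] at hx
            rcases hx with rfl | rfl | rfl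
            · simpa using hu'
            · simpa using hv'
            · simpa using hy.symm
          have hc3 : ({u, v, y} : Finset V).card = 3 := by
            rw [Finset.card_insert_of_notMem (by simp [hne2, hyu.symm]),
              Finset.card_pair hyv.symm]
          have := Finset.card_le_card hsub
          rw [hc3, card_neighborFinset_eq_degree] at this
          have := hdeg u'
          omega
  let f : V → Fin n := fun v => ⟨G.dist v0 v, hDlt v⟩
  have hfinj : Function.Injective f := by
    intro u v h
    have : G.dist v0 u = G.dist v0 v := congrArg Fin.val h
    exact hinj (G.dist v0 v) u v this rfl
  have hfbij : Function.Bijective f :=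
    (Fintype.bijective_iff_injective_and_card f).mpr ⟨hfinj, by simp [hcard]⟩
  refine ⟨⟨Equiv.ofBijective f hfbij, @fun u v => ?_⟩⟩
  rw [pathGraph_adj]
  change G.dist v0 u + 1 = G.dist v0 v ∨ G.dist v0 v + 1 = G.dist v0 u ↔ G.Adj u v
  constructor
  · rintro (h | h)
    · obtain ⟨u'', hu'', h1⟩ := dist_pred hT (v0 := v0) (v := v) (by omega)
      have : u'' = u := hinj (G.dist v0 u) u'' u (by omega) rfl
      rwa [this] at hu''
    · obtain ⟨v'', hv'', h1⟩ := dist_pred hT (v0 := v0) (v := u) (by omega)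
      have : v'' = v := hinj (G.dist v0 v) v'' v (by omega) rfl
      rw [this] at hv''
      exact hv''.symm
  · intro huv
    have h1 := dist_step hT (v0 := v0) huv
    have h2 := dist_step hT (v0 := v0) huv.symm
    have h3 := dist_adj_ne hT (v0 := v0) huv
    omega

lemma degree_le_two_of_path_iso {n : ℕ} (e : G ≃g pathGraph n) (v : V) :
    G.degree v ≤ 2 := by
  have hinj : Function.Injective fun w : V => (e w).val := fun a b hab =>
    e.injective (Fin.val_injective hab)
  have hsub : (G.neighborFinset v).image (fun w => (e w).val)
      ⊆ {(e v).val - 1, (e v).val + 1} := by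
    intro a ha
    simp only [Finset.mem_image, mem_neighborFinset] at ha
    obtain ⟨w, hw, rfl⟩ := ha
    have h := e.map_adj_iff.mpr hw
    rw [pathGraph_adj] at h
    simp only [Finset.mem_insert, Finset.mem_singleton]
    omega
  rw [← card_neighborFinset_eq_degree,
    ← Finset.card_image_of_injective (G.neighborFinset v) hinj]
  exact le_trans (Finset.card_le_card hsub)
    (le_trans (Finset.card_insert_le _ _) (by simp))

lemma adj_or_adj (hT : G.IsTree) {u v : V} (h : G.Adj u v)
    (hdeg : G.degree u + G.degree v = Fintype.card V) (y : V) :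
    G.Adj u y ∨ G.Adj v y := by
  have hdisj : Disjoint (G.neighborFinset u) (G.neighborFinset v) := by
    rw [Finset.disjoint_left]
    intro x hxu hxv
    rw [mem_neighborFinset] at hxu hxv
    exact tree_no_common hT h hxu hxv
  have hcard : (G.neighborFinset u ∪ G.neighborFinset v).card = Fintype.card V := by
    rw [Finset.card_union_of_disjoint hdisj, card_neighborFinset_eq_degree,
      card_neighborFinset_eq_degree, hdeg]
  have huniv : G.neighborFinset u ∪ G.neighborFinset v = Finset.univ :=
    Finset.eq_univ_of_card _ hcard
  have : y ∈ G.neighborFinset u ∪ G.neighborFinset v := by rw [huniv]; exact Finset.mem_univ y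
  rw [Finset.mem_union, mem_neighborFinset, mem_neighborFinset] at this
  exact this

lemma exists_center (hT : G.IsTree) (h3 : 3 ≤ Fintype.card V)
    (hall : ∀ u v, G.Adj u v → G.degree u + G.degree v = Fintype.card V) :
    ∃ c, G.degree c = Fintype.card V - 1 := by
  have hne : Nonempty V := Fintype.card_pos_iff.mp (by omega)
  obtain ⟨u⟩ := hne
  obtain ⟨v, huv⟩ := (G.degree_pos_iff_exists_adj u).mp (tree_degree_pos hT (by omega) u)
  by_cases hu1 : G.degree u = 1
  · exact ⟨v, by have := hall u v huv; omega⟩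
  by_cases hv1 : G.degree v = 1
  · exact ⟨u, by have := hall u v huv; omega⟩
  exfalso
  have hu2 : 2 ≤ G.degree u := by have := tree_degree_pos hT (by omega) u; omega
  have hv2 : 2 ≤ G.degree v := by have := tree_degree_pos hT (by omega) v; omega
  obtain ⟨x, hx, hxv⟩ := Finset.exists_mem_ne
    (s := G.neighborFinset u) (by rw [card_neighborFinset_eq_degree]; omega) v
  rw [mem_neighborFinset] at hx
  have hnxv : ¬G.Adj v x := fun hvx => tree_no_common hT huv hx hvx
  have hdx : G.degree x = G.degree v := by
    have h1 := hall u x hx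
    have h2 := hall u v huv
    omega
  obtain ⟨y, hy, hyu⟩ := Finset.exists_mem_ne
    (s := G.neighborFinset x) (by rw [card_neighborFinset_eq_degree]; omega) u
  rw [mem_neighborFinset] at hy
  have hyv : y ≠ v := fun h => hnxv (h ▸ hy).symm
  rcases adj_or_adj hT huv (hall u v huv) y with h | h
  · exact tree_no_common hT hx h hy
  · -- 4-cycle u - x - y - v - u
    have hxu : x ≠ u := hx.ne'
    have hyx : y ≠ x := hy.ne'
    have hyu' : y ≠ u := hyu
    have hvu : v ≠ u := huv.ne'
    have hp : (Walk.cons hx (Walk.cons hy (Walk.cons h.symm Walk.nil)) : G.Walk u v).IsPath := by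
      simp [Walk.isPath_def, hxu, hyx, hyu', hvu, hxv, hyv, hxu.symm, hyx.symm, hyu'.symm, hvu.symm]
    have heq := (isAcyclic_iff_path_unique.mp hT.IsAcyclic) (SimpleGraph.Path.singleton huv) ⟨_, hp⟩
    have := congrArg (fun q : G.Path u v => q.1.length) heq
    simp [SimpleGraph.Path.singleton] at this

lemma center_adj {c : V} (hc : G.degree c = Fintype.card V - 1) :
    ∀ w, w ≠ c → G.Adj c w := by
  have h1 : Fintype.card V ≠ 0 := fun h =>
    (Fintype.card_eq_zero_iff.mp h).elim c
  have hsub : G.neighborFinset c ⊆ Finset.univ.erase c := by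
    intro x hx
    rw [mem_neighborFinset] at hx
    exact Finset.mem_erase.mpr ⟨hx.ne', Finset.mem_univ x⟩
  have heq : G.neighborFinset c = Finset.univ.erase c := by
    apply Finset.eq_of_subset_of_card_le hsub
    rw [Finset.card_erase_of_mem (Finset.mem_univ c), Finset.card_univ,
      card_neighborFinset_eq_degree, hc]
  intro w hw
  have : w ∈ G.neighborFinset c := by
    rw [heq]
    exact Finset.mem_erase.mpr ⟨hw, Finset.mem_univ w⟩
  rwa [mem_neighborFinset] at this

lemma star_iso {n : ℕ} (hn : 3 ≤ n) (hcard : Fintype.card V = n) {c : V}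
    (hadj : ∀ u v, G.Adj u v ↔ (u ≠ v ∧ (u = c ∨ v = c))) :
    Nonempty (G ≃g _root_.starGraph n) := by
  let e0 := Fintype.equivFinOfCardEq hcard
  let g : V ≃ Fin n := e0.trans (Equiv.swap (e0 c) ⟨0, by omega⟩)
  have hgc : g c = ⟨0, by omega⟩ := by simp [g, Equiv.swap_apply_left]
  have hval : ∀ u : V, (g u).val = 0 ↔ u = c := by
    intro u
    constructor
    · intro h
      apply g.injective
      rw [hgc]
      exact Fin.ext (by simpa using h)
    · rintro rfl
      rw [hgc]
  refine ⟨⟨g, @fun u v => ?_⟩⟩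
  show ((g u ≠ g v) ∧ ((g u).val = 0 ∨ (g v).val = 0)) ↔ G.Adj u v
  rw [hadj u v]
  constructor
  · rintro ⟨hne, h0⟩
    refine ⟨fun h => hne (by rw [h]), ?_⟩
    rcases h0 with h0 | h0
    · exact Or.inl ((hval u).mp h0)
    · exact Or.inr ((hval v).mp h0)
  · rintro ⟨hne, h0⟩
    refine ⟨fun h => hne (g.injective h), ?_⟩
    rcases h0 with rfl | rfl
    · exact Or.inl ((hval u).mpr rfl)
    · exact Or.inr ((hval v).mpr rfl)

lemma of_star_iso {n : ℕ} (hn : 3 ≤ n) (e : G ≃g _root_.starGraph n) :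
    ∃ c : V, (∀ w, w ≠ c → G.Adj c w) ∧ (∀ u v, G.Adj u v → u = c ∨ v = c) := by
  set c := e.symm ⟨0, by omega⟩ with hc
  have hec : e c = ⟨0, by omega⟩ := e.apply_symm_apply _
  refine ⟨c, ?_, ?_⟩
  · intro w hw
    have hne : e c ≠ e w := fun h => hw (e.injective h).symm
    have : (_root_.starGraph n).Adj (e c) (e w) := ⟨hne, Or.inl (by rw [hec])⟩
    exact e.map_adj_iff.mp this
  · intro u v huv
    have h := e.map_adj_iff.mpr huv
    rcases h.2 with h0 | h0
    · left
      apply e.injective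
      rw [hec]
      exact Fin.ext (by simpa using h0)
    · right
      apply e.injective
      rw [hec]
      exact Fin.ext (by simpa using h0)

lemma nat_deg_ineq {d : ℕ} (h : 1 ≤ d) : 3 * d ≤ d ^ 2 + 2 := by
  rcases Nat.lt_or_ge d 3 with h3 | h3
  · interval_cases d <;> norm_num
  · nlinarith

lemma nat_deg_eq {d : ℕ} (h : 1 ≤ d) (he : 3 * d = d ^ 2 + 2) : d ≤ 2 := by
  by_contra hc
  push_neg at hc
  nlinarith

lemma nat_c_ineq {c : ℕ} (h : 3 ≤ c) : 7 * c ≤ c ^ 2 + 12 := by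
  rcases Nat.lt_or_ge c 5 with h5 | h5
  · interval_cases c <;> norm_num
  · nlinarith

lemma nat_c_eq {c : ℕ} (h3 : 3 ≤ c) (h4 : c ≤ 4) : c ^ 2 + 12 = 7 * c := by
  interval_cases c <;> norm_num

end Helpers

theorem evZagreb_tree_bounds {V : Type*} [Fintype V] (G : SimpleGraph V) (n : ℕ)
    (hn : 3 ≤ n) (hcard : Fintype.card V = n) (hT : G.IsTree) :
    16 * n - 30 ≤ evZagreb G ∧ evZagreb G ≤ n ^ 2 * (n - 1) ∧
      (evZagreb G = 16 * n - 30 ↔ Nonempty (G ≃g SimpleGraph.pathGraph n)) ∧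
      (evZagreb G = n ^ 2 * (n - 1) ↔ Nonempty (G ≃g _root_.starGraph n)) := by
  have hcard3 : 3 ≤ Fintype.card V := by omega
  have hE : G.edgeFinset.card = n - 1 := by
    have := hT.card_edgeFinset
    omega
  have hdpos : ∀ v, 1 ≤ G.degree v := fun v => tree_degree_pos hT (by omega) v
  have hsumdeg : ∑ v, G.degree v = 2 * (n - 1) := by
    rw [G.sum_degrees_eq_twice_card_edges, hE]
  have hC : ∑ e ∈ G.edgeFinset, evDeg G e = ∑ v, G.degree v ^ 2 := sum_evDeg hT
  have hSdef : evZagreb G = ∑ e ∈ G.edgeFinset, evDeg G e ^ 2 := rfl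
  have hc3 : ∀ e ∈ G.edgeFinset, 3 ≤ evDeg G e := by
    intro e he
    induction e with
    | _ u v =>
      rw [mem_edgeFinset, mem_edgeSet] at he
      rw [evDeg_adj hT he]
      have h1 := hdpos u
      have h2 := hdpos v
      rcases Nat.lt_or_ge (G.degree u + G.degree v) 3 with h | h
      · exact absurd (not_both_leaves hT hcard3 he (by omega) (by omega)) not_false
      · exact h
  have hcn : ∀ e ∈ G.edgeFinset, evDeg G e ≤ n := fun e _ => hcard ▸ evDeg_le_card
  -- key sum (in)equalities
  have hMge : 3 * (2 * (n - 1)) ≤ (∑ v, G.degree v ^ 2) + 2 * n := by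
    have h1 : ∑ v, 3 * G.degree v ≤ ∑ v, (G.degree v ^ 2 + 2) :=
      Finset.sum_le_sum fun v _ => nat_deg_ineq (hdpos v)
    rw [← Finset.mul_sum, hsumdeg, Finset.sum_add_distrib, Finset.sum_const,
      Finset.card_univ, hcard, smul_eq_mul] at h1
    omega
  have hSge : 7 * (∑ v, G.degree v ^ 2) ≤ evZagreb G + 12 * (n - 1) := by
    have h1 : ∑ e ∈ G.edgeFinset, 7 * evDeg G e
        ≤ ∑ e ∈ G.edgeFinset, (evDeg G e ^ 2 + 12) :=
      Finset.sum_le_sum fun e he => nat_c_ineq (hc3 e he)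
    rw [← Finset.mul_sum, hC, Finset.sum_add_distrib, Finset.sum_const, hE,
      smul_eq_mul, ← hSdef] at h1
    omega
  have hlow : 16 * n - 30 ≤ evZagreb G := by omega
  have hup : evZagreb G ≤ n ^ 2 * (n - 1) := by
    rw [hSdef]
    calc ∑ e ∈ G.edgeFinset, evDeg G e ^ 2
        ≤ ∑ _e ∈ G.edgeFinset, n ^ 2 :=
          Finset.sum_le_sum fun e he => Nat.pow_le_pow_left (hcn e he) 2
      _ = (n - 1) * n ^ 2 := by rw [Finset.sum_const, hE, smul_eq_mul]
      _ = n ^ 2 * (n - 1) := mul_comm _ _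
  refine ⟨hlow, hup, ⟨?_, ?_⟩, ⟨?_, ?_⟩⟩
  · -- equality lower → path
    intro heq
    have hsum_eq : ∑ v, 3 * G.degree v = ∑ v, (G.degree v ^ 2 + 2) := by
      rw [← Finset.mul_sum, hsumdeg, Finset.sum_add_distrib, Finset.sum_const,
        Finset.card_univ, hcard, smul_eq_mul]
      omega
    have hpt := (Finset.sum_eq_sum_iff_of_le
      (fun v _ => nat_deg_ineq (hdpos v))).mp hsum_eq
    exact path_iso hT hn hcard fun v =>
      nat_deg_eq (hdpos v) (hpt v (Finset.mem_univ v))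
  · -- path → equality lower
    rintro ⟨e⟩
    have hdle := degree_le_two_of_path_iso e
    have hd12 : ∀ v : V, 3 * G.degree v = G.degree v ^ 2 + 2 := by
      intro v
      have h1 := hdpos v
      have h2 := hdle v
      interval_cases (G.degree v) <;> norm_num
    have hMval : 3 * (2 * (n - 1)) = (∑ v, G.degree v ^ 2) + 2 * n := by
      have := Finset.sum_congr rfl fun v (_ : v ∈ Finset.univ) => hd12 v
      rw [← Finset.mul_sum, hsumdeg, Finset.sum_add_distrib, Finset.sum_const,
        Finset.card_univ, hcard, smul_eq_mul] at this
      omega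
    have hc4 : ∀ e ∈ G.edgeFinset, evDeg G e ≤ 4 := by
      intro e he
      induction e with
      | _ u v =>
        rw [mem_edgeFinset, mem_edgeSet] at he
        rw [evDeg_adj hT he]
        have := hdle u
        have := hdle v
        omega
    have hSeq : evZagreb G + 12 * (n - 1) = 7 * ∑ v, G.degree v ^ 2 := by
      have h1 : ∑ e ∈ G.edgeFinset, (evDeg G e ^ 2 + 12)
          = ∑ e ∈ G.edgeFinset, 7 * evDeg G e :=
        Finset.sum_congr rfl fun e he => nat_c_eq (hc3 e he) (hc4 e he)
      rw [← Finset.mul_sum, hC, Finset.sum_add_distrib, Finset.sum_const, hE,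
        smul_eq_mul, ← hSdef] at h1
      omega
    omega
  · -- equality upper → star
    intro heq
    have hsum_eq : ∑ e ∈ G.edgeFinset, evDeg G e ^ 2 = ∑ _e ∈ G.edgeFinset, n ^ 2 := by
      rw [Finset.sum_const, hE, smul_eq_mul, ← hSdef, heq, mul_comm]
    have hpt := (Finset.sum_eq_sum_iff_of_le
      (fun e he => Nat.pow_le_pow_left (hcn e he) 2)).mp hsum_eq
    have hev_n : ∀ e ∈ G.edgeFinset, evDeg G e = n := fun e he =>
      Nat.pow_left_injective (by norm_num) (hpt e he)
    have hdall : ∀ u v, G.Adj u v → G.degree u + G.degree v = Fintype.card V := by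
      intro u v h
      have := hev_n s(u, v) (by rw [mem_edgeFinset, mem_edgeSet]; exact h)
      rw [evDeg_adj hT h] at this
      omega
    obtain ⟨c, hc⟩ := exists_center hT hcard3 hdall
    have hcadj : ∀ w, w ≠ c → G.Adj c w := center_adj hc
    have hadj : ∀ u v, G.Adj u v ↔ (u ≠ v ∧ (u = c ∨ v = c)) := by
      intro u v
      constructor
      · intro h
        refine ⟨h.ne, ?_⟩
        by_contra hcon
        push_neg at hcon
        exact tree_no_common hT h (hcadj u hcon.1).symm (hcadj v hcon.2).symm
      · rintro ⟨hne, rfl | rfl⟩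
        · exact hcadj v (Ne.symm hne)
        · exact (hcadj u hne).symm
    exact star_iso hn hcard hadj
  · -- star → equality upper
    rintro ⟨e⟩
    obtain ⟨c, hcadj, hedge⟩ := of_star_iso hn e
    have huniv : insert c (G.neighborFinset c) = Finset.univ := by
      apply Finset.eq_univ_of_forall
      intro w
      by_cases h : w = c
      · simp [h]
      · simp only [Finset.mem_insert, mem_neighborFinset]
        exact Or.inr (hcadj w h)
    have hev : ∀ e' ∈ G.edgeFinset, evDeg G e' = n := by
      intro e' he
      induction e' with
      | _ u v =>
        rw [mem_edgeFinset, mem_edgeSet] at he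
        have hc : u = c ∨ v = c := hedge u v he
        have hun : (insert u (G.neighborFinset u)) ∪ (insert v (G.neighborFinset v))
            = Finset.univ := by
          rcases hc with rfl | rfl
          · rw [huniv]
            simp
          · rw [huniv]
            simp
        show ((insert u (G.neighborFinset u)) ∪ (insert v (G.neighborFinset v))).card = n
        rw [hun, Finset.card_univ, hcard]
    rw [hSdef, Finset.sum_congr rfl fun e' he => by rw [hev e' he],
      Finset.sum_const, hE, smul_eq_mul, mul_comm]
end

section
/- Let T be a tree on n ≥ 5 vertices. Then S^α(T) ≤ n(n−1)², with equality if and only if T is a star, where S^α(T) = Σ_{v∈V(T)} c_v² is the first ve-degree Zagreb alpha index. -/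
open scoped Classical
open Finset SimpleGraph

theorem veAlpha_tree_upper_bound {V : Type*} [Fintype V] (G : SimpleGraph V) (n : ℕ)
    (hn : 5 ≤ n) (hcard : Fintype.card V = n) (hT : G.IsTree) :
    veAlpha G ≤ n * (n - 1) ^ 2 ∧
      (veAlpha G = n * (n - 1) ^ 2 ↔ Nonempty (G ≃g _root_.starGraph n)) := by
  classical
  haveI : NeZero n := ⟨by omega⟩
  have hEdge : G.edgeFinset.card = n - 1 := by
    have h := hT.card_edgeFinset
    rw [hcard] at h; omega
  have hle : ∀ v, veDeg G v ≤ n - 1 := fun v => by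
    rw [← hEdge]; exact Finset.card_filter_le _ _
  have hub : veAlpha G ≤ n * (n - 1) ^ 2 := by
    calc veAlpha G ≤ ∑ _v : V, (n - 1) ^ 2 :=
          Finset.sum_le_sum (fun v _ => Nat.pow_le_pow_left (hle v) 2)
      _ = n * (n - 1) ^ 2 := by
          rw [Finset.sum_const, Finset.card_univ, hcard, smul_eq_mul]
  -- positive degree everywhere
  have hdpos : ∀ w : V, 0 < G.degree w := by
    intro w
    rw [G.degree_pos_iff_exists_adj]
    have : 1 < Fintype.card V := by omega
    obtain ⟨u, hu⟩ := Fintype.exists_ne_of_one_lt_card this w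
    obtain ⟨p⟩ := hT.isConnected.preconnected w u
    cases p with
    | nil => exact absurd rfl hu.symm
    | cons h _ => exact ⟨_, h⟩
  -- center characterization implies equality
  have centerEq : (∃ c : V, ∀ a b, G.Adj a b ↔ a ≠ b ∧ (a = c ∨ b = c)) →
      veAlpha G = n * (n - 1) ^ 2 := by
    rintro ⟨c, hc⟩
    have hv : ∀ v, veDeg G v = n - 1 := by
      intro v
      have hfil : (G.edgeFinset.filter
          (fun e => ∃ u ∈ insert v (G.neighborFinset v), u ∈ e)) = G.edgeFinset := by
        apply Finset.filter_true_of_mem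
        intro e he
        refine ⟨c, ?_, ?_⟩
        · by_cases hvc : v = c
          · exact hvc ▸ Finset.mem_insert_self _ _
          · exact Finset.mem_insert_of_mem
              (G.mem_neighborFinset v c |>.2 ((hc v c).2 ⟨hvc, Or.inr rfl⟩))
        · rw [SimpleGraph.mem_edgeFinset] at he
          induction e with
          | h a b =>
            have := ((hc a b).1 he).2
            rw [Sym2.mem_iff]
            rcases this with h | h
            · exact Or.inl h.symm
            · exact Or.inr h.symm
      rw [veDeg, hfil, hEdge]
    rw [veAlpha]
    simp only [hv]
    rw [Finset.sum_const, Finset.card_univ, hcard, smul_eq_mul]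
  -- equality implies center characterization
  have eqCenter : veAlpha G = n * (n - 1) ^ 2 →
      (∃ c : V, ∀ a b, G.Adj a b ↔ a ≠ b ∧ (a = c ∨ b = c)) := by
    intro heq
    have hall : ∀ v, ∀ e ∈ G.edgeFinset, ∃ u ∈ insert v (G.neighborFinset v), u ∈ e := by
      have hv : ∀ v, veDeg G v = n - 1 := by
        by_contra hcon
        push_neg at hcon
        obtain ⟨v0, hv0⟩ := hcon
        have hlt : veDeg G v0 < n - 1 := lt_of_le_of_ne (hle v0) hv0
        have : veAlpha G < ∑ _v : V, (n - 1) ^ 2 := by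
          apply Finset.sum_lt_sum (fun v _ => Nat.pow_le_pow_left (hle v) 2)
          exact ⟨v0, Finset.mem_univ _, Nat.pow_lt_pow_left hlt (by norm_num)⟩
        rw [heq, Finset.sum_const, Finset.card_univ, hcard, smul_eq_mul] at this
        omega
      intro v
      have hcardf : (G.edgeFinset.filter
          (fun e => ∃ u ∈ insert v (G.neighborFinset v), u ∈ e)).card
            = G.edgeFinset.card := by
        rw [← veDeg, hv, hEdge]
      have := Finset.eq_of_subset_of_card_le (Finset.filter_subset _ _) (le_of_eq hcardf.symm)
      intro e he
      have he' : e ∈ G.edgeFinset.filter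
          (fun e => ∃ u ∈ insert v (G.neighborFinset v), u ∈ e) := by rw [this]; exact he
      exact (Finset.mem_filter.1 he').2
    -- find a leaf
    obtain ⟨v, hv1⟩ : ∃ v, G.degree v ≤ 1 := by
      by_contra hcon
      push_neg at hcon
      have : ∑ w : V, G.degree w ≥ ∑ _w : V, 2 :=
        Finset.sum_le_sum (fun w _ => hcon w)
      rw [Finset.sum_const, Finset.card_univ, hcard, smul_eq_mul] at this
      rw [G.sum_degrees_eq_twice_card_edges, hEdge] at this
      omega
    have hv1' : G.degree v = 1 := le_antisymm hv1 (hdpos v)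
    rw [SimpleGraph.degree, Finset.card_eq_one] at hv1'
    obtain ⟨c, hcnb⟩ := hv1'
    -- every edge contains v or c
    have hmem : ∀ e ∈ G.edgeFinset, v ∈ e ∨ c ∈ e := by
      intro e he
      obtain ⟨u, hu, hue⟩ := hall v e he
      rw [hcnb] at hu
      rcases Finset.mem_insert.1 hu with h | h
      · exact Or.inl (h ▸ hue)
      · exact Or.inr ((Finset.mem_singleton.1 h) ▸ hue)
    have hnbv : ∀ x, G.Adj v x ↔ x = c := by
      intro x
      rw [← G.mem_neighborFinset, hcnb, Finset.mem_singleton]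
    have hvc : G.Adj v c := (hnbv c).2 rfl
    -- c adjacent to all others
    have hcadj : ∀ b, b ≠ c → G.Adj c b := by
      intro b hb
      obtain ⟨x, hx⟩ := G.degree_pos_iff_exists_adj b |>.1 (hdpos b)
      have hbe : s(b, x) ∈ G.edgeFinset := SimpleGraph.mem_edgeFinset.2 hx
      rcases hmem _ hbe with h | h
      · rw [Sym2.mem_iff] at h
        rcases h with h | h
        · subst h
          have : x = c := (hnbv x).1 hx
          exact (this ▸ hx).symm
        · subst h
          have : b = c := (hnbv b).1 hx.symm
          exact absurd this hb
      · rw [Sym2.mem_iff] at h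
        rcases h with h | h
        · exact absurd h.symm hb
        · exact (h ▸ hx).symm
    refine ⟨c, fun a b => ⟨?_, ?_⟩⟩
    · intro hab
      refine ⟨hab.ne, ?_⟩
      have he : s(a, b) ∈ G.edgeFinset := SimpleGraph.mem_edgeFinset.2 hab
      rcases hmem _ he with h | h
      · rw [Sym2.mem_iff] at h
        rcases h with h | h
        · subst h
          exact Or.inr ((hnbv b).1 hab)
        · subst h
          exact Or.inl ((hnbv a).1 hab.symm)
      · rw [Sym2.mem_iff] at h
        rcases h with h | h
        · exact Or.inl h.symm
        · exact Or.inr h.symm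
    · rintro ⟨hab, h | h⟩
      · subst h; exact (hcadj b (fun hh => hab hh.symm)).symm.symm
      · subst h; exact (hcadj a hab).symm
  refine ⟨hub, ?_, fun ⟨f⟩ => ?_⟩
  · intro heq
    obtain ⟨c, hc⟩ := eqCenter heq
    have e0 : V ≃ Fin n := Fintype.equivFinOfCardEq hcard
    let e : V ≃ Fin n := e0.trans (Equiv.swap (e0 c) 0)
    have hec : e c = 0 := by simp [e]
    have he0 : ∀ a, e a = 0 ↔ a = c := by
      intro a
      rw [← hec]
      exact ⟨fun h => e.injective h, fun h => h ▸ rfl⟩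
    refine ⟨⟨e, ?_⟩⟩
    intro a b
    show (_root_.starGraph n).Adj (e a) (e b) ↔ G.Adj a b
    rw [hc]
    constructor
    · rintro ⟨hne, h | h⟩
      · refine ⟨fun hh => hne (hh ▸ rfl), Or.inl ((he0 a).1 (Fin.ext h))⟩
      · refine ⟨fun hh => hne (hh ▸ rfl), Or.inr ((he0 b).1 (Fin.ext h))⟩
    · rintro ⟨hne, h | h⟩
      · exact ⟨fun hh => hne (e.injective hh),
          Or.inl (congrArg Fin.val ((he0 a).2 h))⟩
      · exact ⟨fun hh => hne (e.injective hh),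
          Or.inr (congrArg Fin.val ((he0 b).2 h))⟩
  · apply centerEq
    refine ⟨f.symm 0, fun a b => ?_⟩
    have hf0 : ∀ a : V, f a = 0 ↔ a = f.symm 0 := by
      intro a
      constructor
      · intro h; rw [← h]; exact (f.toEquiv.symm_apply_apply a).symm
      · intro h; rw [h]; exact f.toEquiv.apply_symm_apply 0
    rw [← f.map_rel_iff]
    show (_root_.starGraph n).Adj (f a) (f b) ↔ _
    constructor
    · rintro ⟨hne, h | h⟩
      · exact ⟨fun hh => hne (hh ▸ rfl), Or.inl ((hf0 a).1 (Fin.ext h))⟩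
      · exact ⟨fun hh => hne (hh ▸ rfl), Or.inr ((hf0 b).1 (Fin.ext h))⟩
    · rintro ⟨hne, h | h⟩
      · exact ⟨fun hh => hne (f.toEquiv.injective hh),
          Or.inl (congrArg Fin.val ((hf0 a).2 h))⟩
      · exact ⟨fun hh => hne (f.toEquiv.injective hh),
          Or.inr (congrArg Fin.val ((hf0 b).2 h))⟩
end

section
/- Let T be a tree on n ≥ 5 vertices. Then S^μ(T) ≤ (n−1)³, with equality if and only if T is a star, where S^μ(T) = Σ_{uv∈E(T)} c_u·c_v is the second ve-degree Zagreb index. -/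
open scoped Classical
open Finset SimpleGraph

section Aux

variable {V : Type*} [Fintype V]

private lemma veDeg_le_card (G : SimpleGraph V) (v : V) :
    veDeg G v ≤ G.edgeFinset.card :=
  Finset.card_filter_le _ _

end Aux

theorem veMu_tree_upper_bound {V : Type*} [Fintype V] (G : SimpleGraph V) (n : ℕ)
    (hn : 5 ≤ n) (hcard : Fintype.card V = n) (hT : G.IsTree) :
    veMu G ≤ (n - 1) ^ 3 ∧
      (veMu G = (n - 1) ^ 3 ↔ Nonempty (G ≃g _root_.starGraph n)) := by
  classical
  have hn1 : 0 < n - 1 := by omega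
  have hedge : G.edgeFinset.card = n - 1 := by
    have h := hT.card_edgeFinset
    omega
  set f : Sym2 V → ℕ :=
    Sym2.lift ⟨fun u v => veDeg G u * veDeg G v, fun u v => Nat.mul_comm _ _⟩ with hf
  have hveMu : veMu G = ∑ e ∈ G.edgeFinset, f e := rfl
  have hvle : ∀ v, veDeg G v ≤ n - 1 := fun v => hedge ▸ veDeg_le_card G v
  have hterm : ∀ e ∈ G.edgeFinset, f e ≤ (n - 1) ^ 2 := by
    intro e _
    induction e using Sym2.ind with
    | _ a b =>
      rw [hf, Sym2.lift_mk, sq]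
      exact Nat.mul_le_mul (hvle a) (hvle b)
  have hle : veMu G ≤ (n - 1) ^ 3 := by
    rw [hveMu]
    calc ∑ e ∈ G.edgeFinset, f e ≤ ∑ _e ∈ G.edgeFinset, (n - 1) ^ 2 :=
          Finset.sum_le_sum hterm
      _ = (n - 1) * (n - 1) ^ 2 := by rw [Finset.sum_const, hedge, smul_eq_mul]
      _ = (n - 1) ^ 3 := by ring
  refine ⟨hle, ?_, ?_⟩
  · -- equality → star
    intro heq
    have hV2 : 1 < Fintype.card V := by omega
    have hdegpos : ∀ v : V, 0 < G.degree v := by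
      intro v
      rw [G.degree_pos_iff_exists_adj]
      obtain ⟨w, hw⟩ := Fintype.exists_ne_of_one_lt_card hV2 v
      obtain ⟨p⟩ := hT.isConnected v w
      cases p with
      | nil => exact absurd rfl hw
      | cons h q => exact ⟨_, h⟩
    have hsum : ∑ e ∈ G.edgeFinset, f e = ∑ _e ∈ G.edgeFinset, (n - 1) ^ 2 := by
      rw [Finset.sum_const, hedge, smul_eq_mul, ← hveMu, heq]; ring
    have hterm' : ∀ e ∈ G.edgeFinset, f e = (n - 1) ^ 2 :=
      (Finset.sum_eq_sum_iff_of_le hterm).1 hsum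
    have hvd : ∀ a b, G.Adj a b → veDeg G a = n - 1 := by
      intro a b hab
      have he : s(a, b) ∈ G.edgeFinset := by
        rw [SimpleGraph.mem_edgeFinset, SimpleGraph.mem_edgeSet]; exact hab
      have h1 := hterm' _ he
      rw [hf, Sym2.lift_mk] at h1
      have h1' : veDeg G a * veDeg G b = (n - 1) ^ 2 := h1
      have h2 : (n - 1) * (n - 1) ≤ veDeg G a * (n - 1) := by
        calc (n - 1) * (n - 1) = veDeg G a * veDeg G b := by rw [h1', sq]
          _ ≤ veDeg G a * (n - 1) := Nat.mul_le_mul_left _ (hvle b)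
      exact le_antisymm (hvle a) (Nat.le_of_mul_le_mul_right h2 hn1)
    have hmeet : ∀ v, ∀ e ∈ G.edgeFinset, ∃ u ∈ insert v (G.neighborFinset v), u ∈ e := by
      intro v e he
      have hv : veDeg G v = n - 1 := by
        obtain ⟨w, hw⟩ := (G.degree_pos_iff_exists_adj _).1 (hdegpos v)
        exact hvd v w hw
      have hsub : (G.edgeFinset.filter
          (fun e => ∃ u ∈ insert v (G.neighborFinset v), u ∈ e)) ⊆ G.edgeFinset :=
        Finset.filter_subset _ _
      have hfe := Finset.eq_of_subset_of_card_le hsub (by rw [hedge]; exact hv.ge)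
      have he' : e ∈ G.edgeFinset.filter
          (fun e => ∃ u ∈ insert v (G.neighborFinset v), u ∈ e) := by rw [hfe]; exact he
      exact (Finset.mem_filter.1 he').2
    -- leaf
    have hleaf : ∃ v, G.degree v = 1 := by
      by_contra h
      push_neg at h
      have h2 : ∀ v : V, 2 ≤ G.degree v := fun v => by
        have := hdegpos v; have := h v; omega
      have h3 : 2 * n ≤ ∑ v, G.degree v := by
        calc 2 * n = ∑ _v : V, 2 := by
              rw [Finset.sum_const, Finset.card_univ, hcard, smul_eq_mul]; ring
          _ ≤ _ := Finset.sum_le_sum (fun v _ => h2 v)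
      rw [G.sum_degrees_eq_twice_card_edges, hedge] at h3
      omega
    obtain ⟨v0, hv0⟩ := hleaf
    obtain ⟨p, hp⟩ := Finset.card_eq_one.1
      (by rw [G.card_neighborFinset_eq_degree]; exact hv0)
    have hpv0 : G.Adj v0 p := by
      have : p ∈ G.neighborFinset v0 := by rw [hp]; exact Finset.mem_singleton_self p
      exact (SimpleGraph.mem_neighborFinset _ _ _).1 this
    have hpe : ∀ e ∈ G.edgeFinset, p ∈ e := by
      intro e he
      obtain ⟨u, hu, hue⟩ := hmeet v0 e he
      rw [hp, Finset.mem_insert, Finset.mem_singleton] at hu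
      rcases hu with rfl | rfl
      · -- u = v0 ∈ e; the other endpoint must be p
        induction e using Sym2.ind with
        | _ a b =>
          rw [SimpleGraph.mem_edgeFinset, SimpleGraph.mem_edgeSet] at he
          rw [Sym2.mem_iff] at hue ⊢
          rcases hue with rfl | rfl
          · right
            have hb : b ∈ G.neighborFinset u := (SimpleGraph.mem_neighborFinset _ _ _).2 he
            rw [hp, Finset.mem_singleton] at hb
            exact hb.symm
          · left
            have ha : a ∈ G.neighborFinset u := (SimpleGraph.mem_neighborFinset _ _ _).2 he.symm
            rw [hp, Finset.mem_singleton] at ha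
            exact ha.symm
      · exact hue
    have huniv : ∀ w : V, w ≠ p → G.Adj p w := by
      intro w hw
      obtain ⟨x, hx⟩ := (G.degree_pos_iff_exists_adj _).1 (hdegpos w)
      have he : s(w, x) ∈ G.edgeFinset := by
        rw [SimpleGraph.mem_edgeFinset, SimpleGraph.mem_edgeSet]; exact hx
      have hpm := hpe _ he
      rw [Sym2.mem_iff] at hpm
      rcases hpm with rfl | rfl
      · exact absurd rfl hw
      · exact hx.symm
    have hadj : ∀ a b, G.Adj a b ↔ a ≠ b ∧ (a = p ∨ b = p) := by
      intro a b
      constructor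
      · intro hab
        refine ⟨hab.ne, ?_⟩
        by_contra hcon
        push_neg at hcon
        obtain ⟨hap, hbp⟩ := hcon
        have h1 : G.Adj p a := huniv a hap
        have h2 : G.Adj p b := huniv b hbp
        have hp1 : (SimpleGraph.Walk.cons h1 SimpleGraph.Walk.nil).IsPath := by
          simp [SimpleGraph.Walk.isPath_def, h1.ne]
        have hp2 : (SimpleGraph.Walk.cons h2
            (SimpleGraph.Walk.cons hab.symm SimpleGraph.Walk.nil)).IsPath := by
          simp [SimpleGraph.Walk.isPath_def, h2.ne, h1.ne, hab.ne']
        obtain ⟨q, -, hq⟩ := hT.existsUnique_path p a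
        have e1 := hq _ hp1
        have e2 := hq _ hp2
        have := congrArg SimpleGraph.Walk.length (e1.trans e2.symm)
        simp at this
      · rintro ⟨hne, rfl | rfl⟩
        · exact huniv b hne.symm
        · exact (huniv a hne).symm
    -- build the isomorphism
    have hnpos : 0 < n := by omega
    let z : Fin n := ⟨0, hnpos⟩
    let e0 : V ≃ Fin n := Fintype.equivFinOfCardEq hcard
    let e' : V ≃ Fin n := e0.trans (Equiv.swap (e0 p) z)
    have hep : e' p = z := by simp [e']
    have hzero : ∀ a : V, e' a = z ↔ a = p := by
      intro a
      constructor
      · intro h; exact e'.injective (h.trans hep.symm)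
      · rintro rfl; exact hep
    refine ⟨⟨e', ?_⟩⟩
    intro a b
    show (_root_.starGraph n).Adj (e' a) (e' b) ↔ G.Adj a b
    rw [hadj a b]
    constructor
    · rintro ⟨hne, h0⟩
      refine ⟨fun h => hne (by rw [h]), ?_⟩
      rcases h0 with h | h
      · exact Or.inl ((hzero a).1 (Fin.ext h))
      · exact Or.inr ((hzero b).1 (Fin.ext h))
    · rintro ⟨hne, h | h⟩
      · exact ⟨fun hc => hne (e'.injective hc), Or.inl (by rw [(hzero a).2 h])⟩
      · exact ⟨fun hc => hne (e'.injective hc), Or.inr (by rw [(hzero b).2 h])⟩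
  · -- star → equality
    rintro ⟨φ⟩
    have hnpos : 0 < n := by omega
    let z : Fin n := ⟨0, hnpos⟩
    let c : V := φ.symm z
    have hφc : φ c = z := φ.apply_symm_apply z
    have hcadj : ∀ w : V, w ≠ c → G.Adj c w := by
      intro w hw
      have hzw : z ≠ φ w := fun h => hw (by rw [← φ.symm_apply_apply w, ← h])
      have hstar : (_root_.starGraph n).Adj (φ c) (φ w) := by
        rw [hφc]; exact ⟨hzw, Or.inl rfl⟩
      exact φ.map_rel_iff.1 hstar
    have hec : ∀ e ∈ G.edgeFinset, c ∈ e := by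
      intro e he
      induction e using Sym2.ind with
      | _ a b =>
        rw [SimpleGraph.mem_edgeFinset, SimpleGraph.mem_edgeSet] at he
        have hstar : (_root_.starGraph n).Adj (φ a) (φ b) := φ.map_rel_iff.2 he
        rw [Sym2.mem_iff]
        rcases hstar.2 with h | h
        · left
          have : φ a = z := Fin.ext h
          exact (φ.toEquiv.injective (this.trans hφc.symm)).symm ▸ rfl
        · right
          have : φ b = z := Fin.ext h
          exact (φ.toEquiv.injective (this.trans hφc.symm)).symm ▸ rfl
    have hv : ∀ v, veDeg G v = n - 1 := by
      intro v
      have hfilter : G.edgeFinset.filter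
          (fun e => ∃ u ∈ insert v (G.neighborFinset v), u ∈ e) = G.edgeFinset := by
        apply Finset.filter_true_of_mem
        intro e he
        rcases eq_or_ne v c with h | hvc
        · exact ⟨v, Finset.mem_insert_self _ _, by rw [h]; exact hec e he⟩
        · refine ⟨c, ?_, hec e he⟩
          rw [Finset.mem_insert, SimpleGraph.mem_neighborFinset]
          exact Or.inr (hcadj v hvc).symm
      unfold veDeg
      rw [hfilter, hedge]
    rw [hveMu]
    have hconst : ∀ e ∈ G.edgeFinset, f e = (n - 1) ^ 2 := by
      intro e _
      induction e using Sym2.ind with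
      | _ a b =>
        rw [hf, Sym2.lift_mk]
        show veDeg G a * veDeg G b = (n - 1) ^ 2
        rw [hv, hv, sq]
    rw [Finset.sum_congr rfl hconst, Finset.sum_const, hedge, smul_eq_mul]
    ring
end
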